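/- Let α, β be real numbers with 1/9 < α/β < 1 (in particular 0 < α < β). Then for every μ > 0 the cubic polynomial p_μ(λ) = αλ³ + λ² + βμλ + μ has exactly one real root, and its other two roots form a pair of nonreal complex conjugate numbers. -/

import Mathlib

open Polynomial

private lemma multiset_rot (u v t : ℂ) : ({u, v, t} : Multiset ℂ) = {t, u, v} := by
  change u ::ₘ v ::ₘ t ::ₘ 0 = t ::ₘ u ::ₘ v ::ₘ 0
  rw [Multiset.cons_swap v t, Multiset.cons_swap u t]

private lemma aux_conj_class (z a b : ℂ) (hz : z.im ≠ 0) (hza : z ≠ a) (hzb : z ≠ b)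
    (hab : a ≠ b)
    (hmem : ∀ r ∈ ({z, a, b} : Multiset ℂ), (starRingEnd ℂ) r ∈ ({z, a, b} : Multiset ℂ)) :
    ∃ (x : ℝ) (w : ℂ), w.im ≠ 0 ∧ ({z, a, b} : Multiset ℂ) = {(x : ℂ), w, star w} := by
  have hzz : (starRingEnd ℂ) z ≠ z := fun h => hz (Complex.conj_eq_iff_im.mp h)
  have hcz := hmem z (by simp)
  simp only [Multiset.insert_eq_cons, Multiset.mem_cons, Multiset.mem_singleton] at hcz
  rcases hcz with h | h | h
  · exact absurd h hzz
  · -- conj z = a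
    have hcb := hmem b (by simp)
    simp only [Multiset.insert_eq_cons, Multiset.mem_cons, Multiset.mem_singleton] at hcb
    rcases hcb with hb | hb | hb
    · -- conj b = z ⇒ b = conj z = a, contradiction
      exact absurd (by rw [← h, ← hb]; simp) hab.symm
    · -- conj b = a = conj z ⇒ b = z
      exact absurd ((starRingEnd ℂ).injective (hb.trans h.symm)).symm hzb
    · have hbre : (b.re : ℂ) = b := Complex.conj_eq_iff_re.mp hb
      refine ⟨b.re, z, hz, ?_⟩
      rw [hbre, ← starRingEnd_apply, ← h]
      exact multiset_rot z _ b
  · -- conj z = b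
    have hca := hmem a (by simp)
    simp only [Multiset.insert_eq_cons, Multiset.mem_cons, Multiset.mem_singleton] at hca
    rcases hca with ha | ha | ha
    · -- conj a = z ⇒ a = conj z = b
      exact absurd (by rw [← h, ← ha]; simp) hab
    · have hare : (a.re : ℂ) = a := Complex.conj_eq_iff_re.mp ha
      refine ⟨a.re, z, hz, ?_⟩
      rw [hare, ← starRingEnd_apply, ← h]
      change z ::ₘ a ::ₘ ((starRingEnd ℂ) z) ::ₘ 0 = a ::ₘ z ::ₘ ((starRingEnd ℂ) z) ::ₘ 0
      rw [Multiset.cons_swap z a]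
    · -- conj a = b = conj z ⇒ a = z
      exact absurd ((starRingEnd ℂ).injective (ha.trans h.symm)) (Ne.symm hza)

/-- For `1/9 < α/β < 1` (with `α, β > 0`, so in particular `0 < α < β`)
and every `μ > 0`, the cubic `αλ³ + λ² + βμλ + μ` has exactly one real root and
its other two roots are a pair of nonreal complex conjugate numbers. -/
theorem stmt_0 (α β : ℝ) (hα : 0 < α) (hβ : 0 < β)
    (h1 : 1 / 9 < α / β) (h2 : α / β < 1)
    (μ : ℝ) (hμ : 0 < μ) :
    ∃ (x : ℝ) (z : ℂ), z.im ≠ 0 ∧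
      (C (α : ℂ) * X ^ 3 + X ^ 2 + C ((β : ℂ) * (μ : ℂ)) * X + C (μ : ℂ)).roots =
        {(x : ℂ), z, star z} := by
  -- basic inequalities
  have hαβ : α < β := (div_lt_one hβ).mp h2
  have hβ9α : β < 9 * α := by
    rw [div_lt_div_iff₀ (by norm_num) hβ] at h1; linarith
  -- key inequality
  have key : (β ^ 2 + 18 * α * β - 27 * α ^ 2) ^ 2 < 64 * α * β ^ 3 := by
    nlinarith [mul_pos (sub_pos.2 hαβ) (pow_pos (sub_pos.2 hβ9α) 3)]
  -- the real cubic and its discriminant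
  set Q : Cubic ℝ := ⟨α, 1, β * μ, μ⟩ with hQ
  have ha : Q.a ≠ 0 := ne_of_gt hα
  have hquad : 0 < 4 * α * β ^ 3 * μ ^ 2 - (β ^ 2 + 18 * α * β - 27 * α ^ 2) * μ + 4 := by
    nlinarith [key, sq_nonneg (8 * α * β ^ 3 * μ - (β ^ 2 + 18 * α * β - 27 * α ^ 2)),
      mul_pos hα (pow_pos hβ 3)]
  have hdisc : Q.discr < 0 := by
    have : Q.discr = -(μ * (4 * α * β ^ 3 * μ ^ 2 - (β ^ 2 + 18 * α * β - 27 * α ^ 2) * μ + 4)) := by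
      simp only [hQ, Cubic.discr]; ring
    rw [this]
    exact neg_neg_iff_pos.mpr (mul_pos hμ hquad)
  have hdne : Q.discr ≠ 0 := ne_of_lt hdisc
  -- roots over ℂ
  set φ : ℝ →+* ℂ := algebraMap ℝ ℂ with hφ
  have hsplits : Splits (Q.toPoly.map φ) := IsAlgClosed.splits _
  obtain ⟨r1, r2, r3, hroots⟩ := (Cubic.splits_iff_roots_eq_three ha).mp hsplits
  obtain ⟨h12, h13, h23⟩ := (Cubic.discr_ne_zero_iff_roots_ne ha hroots).mp hdne
  have hdisc_eq := Cubic.discr_eq_prod_three_roots ha hroots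
  -- the complex polynomial
  have hPeq : (C (α : ℂ) * X ^ 3 + X ^ 2 + C ((β : ℂ) * (μ : ℂ)) * X + C (μ : ℂ))
      = (Cubic.map φ Q).toPoly := by
    simp only [Cubic.map, Cubic.toPoly, hQ, hφ, Complex.coe_algebraMap, map_one, C_1, one_mul]
    push_cast
    ring
  have hProots : (C (α : ℂ) * X ^ 3 + X ^ 2 + C ((β : ℂ) * (μ : ℂ)) * X + C (μ : ℂ)).roots
      = ({r1, r2, r3} : Multiset ℂ) := by
    rw [hPeq, ← Cubic.roots, hroots]
  -- conjugation invariance of the roots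
  have hmapconj : (Cubic.map φ Q).roots.map (starRingEnd ℂ) = (Cubic.map φ Q).roots := by
    have hsp : ((Cubic.map φ Q).toPoly).Splits  :=
      IsAlgClosed.splits _
    have h1' := hsp.roots_map (starRingEnd ℂ)
    have h2' : ((Cubic.map φ Q).toPoly).map (starRingEnd ℂ) = (Cubic.map φ Q).toPoly := by
      rw [Cubic.map_toPoly, Polynomial.map_map]
      congr 1
      ext x
      simp [hφ]
    rw [h2'] at h1'
    rw [Cubic.roots, ← h1']
  have hmem : ∀ r ∈ ({r1, r2, r3} : Multiset ℂ),
      (starRingEnd ℂ) r ∈ ({r1, r2, r3} : Multiset ℂ) := by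
    intro r hr
    rw [← hroots, ← hmapconj]
    exact Multiset.mem_map_of_mem _ (by rw [hroots]; exact hr)
  -- not all roots are real
  have hnotallreal : ¬ (r1.im = 0 ∧ r2.im = 0 ∧ r3.im = 0) := by
    rintro ⟨hi1, hi2, hi3⟩
    have e1 : r1 = ((r1.re : ℝ) : ℂ) := by apply Complex.ext <;> simp [hi1]
    have e2 : r2 = ((r2.re : ℝ) : ℂ) := by apply Complex.ext <;> simp [hi2]
    have e3 : r3 = ((r3.re : ℝ) : ℂ) := by apply Complex.ext <;> simp [hi3]
    rw [e1, e2, e3] at hdisc_eq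
    have : (Q.discr : ℂ) = (((α * α * (r1.re - r2.re) * (r1.re - r3.re) * (r2.re - r3.re)) ^ 2 : ℝ)
        : ℂ) := by
      rw [show ((Q.discr : ℝ) : ℂ) = φ Q.discr from rfl, hdisc_eq]
      have haQ : φ Q.a = ((α : ℝ) : ℂ) := by simp [hQ, hφ]
      rw [haQ]
      push_cast
      ring
    have hre : Q.discr = (α * α * (r1.re - r2.re) * (r1.re - r3.re) * (r2.re - r3.re)) ^ 2 :=
      Complex.ofReal_inj.mp this
    nlinarith [sq_nonneg (α * α * (r1.re - r2.re) * (r1.re - r3.re) * (r2.re - r3.re)), hdisc, hre]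
  -- case analysis on which root is nonreal
  by_cases hi1 : r1.im = 0
  · by_cases hi2 : r2.im = 0
    · have hi3 : r3.im ≠ 0 := fun h => hnotallreal ⟨hi1, hi2, h⟩
      have hperm : ({r3, r1, r2} : Multiset ℂ) = {r1, r2, r3} := multiset_rot r1 r2 r3 ▸ rfl
      obtain ⟨x, w, hw, heq⟩ := aux_conj_class r3 r1 r2 hi3 (Ne.symm h13) (Ne.symm h23) h12
        (by rw [hperm]; exact hmem)
      exact ⟨x, w, hw, by rw [hProots, ← hperm, heq]⟩
    · have hperm : ({r2, r1, r3} : Multiset ℂ) = {r1, r2, r3} := by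
        change r2 ::ₘ r1 ::ₘ r3 ::ₘ 0 = r1 ::ₘ r2 ::ₘ r3 ::ₘ 0
        rw [Multiset.cons_swap]
      obtain ⟨x, w, hw, heq⟩ := aux_conj_class r2 r1 r3 hi2 (Ne.symm h12) h23 h13
        (by rw [hperm]; exact hmem)
      exact ⟨x, w, hw, by rw [hProots, ← hperm, heq]⟩
  · obtain ⟨x, w, hw, heq⟩ := aux_conj_class r1 r2 r3 hi1 h12 h13 h23 hmem
    exact ⟨x, w, hw, by rw [hProots, heq]⟩
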